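/- On a finite connected network with a proper subset U ⊂ V, let h : V → ℝ be discrete harmonic on U, let θ be a flow on U (antisymmetric, satisfying the node law at each vertex of U), and let f : V → ℝ agree with h on V∖U. Then ℰ(c df − c dh) + ℰ(θ − c dh) = ℰ(c df − θ), where ℰ denotes the energy (squared r-norm) on antisymmetric edge functions. -/

import Mathlib

open Finset

/-- The energy `(1/2) ∑_e θ(e)² r(e)` of an (antisymmetric) edge function. -/
noncomputable def energyE {E : Type*} [Fintype E] (c : E → ℝ) (θ : E → ℝ) : ℝ :=
  (1 / 2) * ∑ e, θ e ^ 2 * (c e)⁻¹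

/-- Pythagoras for flows: if `h` is discrete harmonic on `U`,
`θ` is a flow on `U`, and `f = h` off `U`, then
`ℰ(c df − c dh) + ℰ(θ − c dh) = ℰ(c df − θ)`. -/
theorem stmt_5 {V E : Type*} [Fintype V] [Fintype E] [DecidableEq V]
    (rev : E → E) (hrev : ∀ e, rev (rev e) = e) (hrevne : ∀ e, rev e ≠ e)
    (tail head : E → V) (htail_rev : ∀ e, tail (rev e) = head e)
    (c : E → ℝ) (hc : ∀ e, 0 < c e) (hcrev : ∀ e, c (rev e) = c e)
    (hconn : ∀ x y : V,
      Relation.ReflTransGen (fun a b => ∃ e, tail e = a ∧ head e = b) x y)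
    (U : Finset V) (hU : U ≠ univ)
    (h : V → ℝ)
    (hharm : ∀ x ∈ U, h x * ∑ e ∈ univ.filter (fun e => tail e = x), c e =
      ∑ e ∈ univ.filter (fun e => tail e = x), c e * h (head e))
    (θ : E → ℝ) (hθanti : ∀ e, θ (rev e) = - θ e)
    (hflow : ∀ x ∈ U, ∑ e ∈ univ.filter (fun e => tail e = x), θ e = 0)
    (f : V → ℝ) (hf : ∀ x ∉ U, f x = h x) :
    energyE c (fun e => c e * (f (head e) - f (tail e))
        - c e * (h (head e) - h (tail e)))
      + energyE c (fun e => θ e - c e * (h (head e) - h (tail e)))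
      = energyE c (fun e => c e * (f (head e) - f (tail e)) - θ e) := by
  set g : V → ℝ := fun x => f x - h x with hg
  set ψ : E → ℝ := fun e => c e * (h (head e) - h (tail e)) - θ e with hψ
  have hhead_rev : ∀ e, head (rev e) = tail e := by
    intro e
    have := htail_rev (rev e)
    rw [hrev] at this
    exact this.symm
  have hψanti : ∀ e, ψ (rev e) = - ψ e := by
    intro e
    simp only [hψ, htail_rev, hhead_rev, hcrev, hθanti]
    ring
  -- node law for ψ on U
  have hψnode : ∀ x ∈ U, ∑ e ∈ univ.filter (fun e => tail e = x), ψ e = 0 := by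
    intro x hx
    have h1 := hharm x hx
    have h2 := hflow x hx
    have : ∑ e ∈ univ.filter (fun e => tail e = x), ψ e
        = (∑ e ∈ univ.filter (fun e => tail e = x), c e * h (head e))
          - h x * (∑ e ∈ univ.filter (fun e => tail e = x), c e)
          - ∑ e ∈ univ.filter (fun e => tail e = x), θ e := by
      rw [Finset.mul_sum, ← Finset.sum_sub_distrib, ← Finset.sum_sub_distrib]
      refine Finset.sum_congr rfl fun e he => ?_
      simp only [Finset.mem_filter] at he
      simp only [hψ, he.2]
      ring
    rw [this, ← h1, h2]
    ring
  -- key orthogonality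
  have key : ∑ e, (g (head e) - g (tail e)) * ψ e = 0 := by
    have hperm : ∑ e, g (head e) * ψ e = - ∑ e, g (tail e) * ψ e := by
      have hb : Function.Bijective rev := Function.Involutive.bijective hrev
      have heq := Fintype.sum_bijective rev hb
        (fun e => g (tail e) * ψ e) (fun e => - (g (head e) * ψ e))
        (fun e => by show g (tail e) * ψ e = - (g (head (rev e)) * ψ (rev e));
                     rw [hhead_rev, hψanti]; ring)
      rw [Finset.sum_neg_distrib] at heq
      linarith
    have hsplit : ∑ e, (g (head e) - g (tail e)) * ψ e
        = (∑ e, g (head e) * ψ e) - ∑ e, g (tail e) * ψ e := by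
      rw [← Finset.sum_sub_distrib]
      exact Finset.sum_congr rfl fun e _ => by ring
    have htailsum : ∑ e, g (tail e) * ψ e = 0 := by
      have := Finset.sum_fiberwise (s := (univ : Finset E)) (g := tail)
        (f := fun e => g (tail e) * ψ e)
      rw [← this]
      refine Finset.sum_eq_zero fun x _ => ?_
      have : ∑ e ∈ univ.filter (fun e => tail e = x), g (tail e) * ψ e
          = g x * ∑ e ∈ univ.filter (fun e => tail e = x), ψ e := by
        rw [Finset.mul_sum]
        refine Finset.sum_congr rfl fun e he => ?_
        simp only [Finset.mem_filter] at he
        rw [he.2]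
      rw [this]
      by_cases hx : x ∈ U
      · rw [hψnode x hx, mul_zero]
      · have : g x = 0 := by simp [hg, hf x hx]
        rw [this, zero_mul]
    rw [hsplit, hperm, htailsum]
    ring
  -- conclude
  simp only [energyE, ← mul_add, ← Finset.sum_add_distrib]
  congr 1
  rw [← sub_eq_zero, ← Finset.sum_sub_distrib]
  have trans : ∀ e : E,
      ((c e * (f (head e) - f (tail e)) - c e * (h (head e) - h (tail e))) ^ 2 * (c e)⁻¹
        + (θ e - c e * (h (head e) - h (tail e))) ^ 2 * (c e)⁻¹)
        - (c e * (f (head e) - f (tail e)) - θ e) ^ 2 * (c e)⁻¹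
      = (-2) * ((g (head e) - g (tail e)) * ψ e) := by
    intro e
    have hce : c e ≠ 0 := (hc e).ne'
    simp only [hg, hψ]
    field_simp
    ring
  rw [Finset.sum_congr rfl fun e _ => trans e, ← Finset.mul_sum, key, mul_zero]
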